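/- Let A be an abelian category and let X be an ℕ-indexed chain complex in A. Then X is contractible if and only if X is acyclic and split, i.e., there exist morphisms s_n : X_n → X_{n+1} (for all n ≥ 0) such that d_{n+1} ∘ s_n ∘ d_{n+1} = d_{n+1}, where d_{n+1} : X_{n+1} → X_n denotes the differential of X. -/

import Mathlib

open CategoryTheory CategoryTheory.Limits

/-- Auxiliary lemma: if `X` is exact at `n+1` and the differential `X.d (n+2) (n+1)`
is "split" by `s`, then any map `g` killing `X.d (n+1) n` satisfies `g ≫ s ≫ d = g`. -/
lemma aux_split_lift {A : Type*} [Category A] [Abelian A]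
    (X : ChainComplex A ℕ) (n : ℕ) (hX : X.ExactAt (n + 1))
    (s : X.X (n + 1) ⟶ X.X (n + 2))
    (hs : X.d (n + 2) (n + 1) ≫ s ≫ X.d (n + 2) (n + 1) = X.d (n + 2) (n + 1))
    {Y : A} (g : Y ⟶ X.X (n + 1)) (hg : g ≫ X.d (n + 1) n = 0) :
    g ≫ s ≫ X.d (n + 2) (n + 1) = g := by
  replace hX := (X.exactAt_iff' (i := n + 2) (j := n + 1) (k := n)
    (ChainComplex.prev ℕ (n + 1)) (ChainComplex.next_nat_succ n)).1 hX
  set S := X.sc' (n + 2) (n + 1) n with hS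
  have hf : S.f = X.d (n + 2) (n + 1) := rfl
  have hgS : S.g = X.d (n + 1) n := rfl
  -- `iCycles ≫ s ≫ d = iCycles`
  have h1 : S.iCycles ≫ s ≫ X.d (n + 2) (n + 1) = S.iCycles := by
    have := hX.epi_toCycles
    refine (cancel_epi S.toCycles).1 ?_
    have h2 : S.toCycles ≫ S.iCycles = S.f := S.toCycles_i
    erw [reassoc_of% h2, h2, hf, hs]
  have h3 : S.liftCycles g (by exact hg) ≫ S.iCycles = g := S.liftCycles_i _ _
  conv_lhs => rw [← h3]
  erw [Category.assoc, h1, h3]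

/-- For a chain complex `X` indexed by `ℕ` in an abelian category,
`X` is contractible (the identity is chain homotopic to zero) if and only if `X` is
acyclic (exact at every degree, including degree `0`) and split (there are maps
`s n : X n ⟶ X (n+1)` with `d ∘ s ∘ d = d`). -/
theorem contractible_iff_acyclic_and_split {A : Type*} [Category A] [Abelian A]
    (X : ChainComplex A ℕ) :
    Nonempty (Homotopy (𝟙 X) 0) ↔
      ((∀ n, X.ExactAt n) ∧
        ∃ s : ∀ n, X.X n ⟶ X.X (n + 1),
          ∀ n, X.d (n + 1) n ≫ s n ≫ X.d (n + 1) n = X.d (n + 1) n) := by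
  constructor
  · rintro ⟨ho⟩
    constructor
    · intro n
      rw [X.exactAt_iff_isZero_homology, IsZero.iff_id_eq_zero]
      have := ho.homologyMap_eq n
      rwa [HomologicalComplex.homologyMap_id, HomologicalComplex.homologyMap_zero] at this
    · refine ⟨fun n => ho.hom n (n + 1), fun n => ?_⟩
      have hc := ho.comm (n + 1)
      simp only [HomologicalComplex.id_f, HomologicalComplex.zero_f, add_zero,
        Homotopy.prevD_chainComplex, Homotopy.dNext_succ_chainComplex] at hc
      have : X.d (n + 1) n ≫ ho.hom n (n + 1) =
          𝟙 (X.X (n + 1)) - ho.hom (n + 1) (n + 2) ≫ X.d (n + 2) (n + 1) := by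
        rw [hc]; abel
      rw [← Category.assoc, this, Preadditive.sub_comp, Category.id_comp, Category.assoc,
        X.d_comp_d, Limits.comp_zero, sub_zero]
  · rintro ⟨hex, s, hs⟩
    -- the differential into degree 0 is epi
    have hepi : Epi (X.d 1 0) := by
      have h0 := hex 0
      replace h0 := (X.exactAt_iff' (i := 1) (j := 0) (k := 0)
        (ChainComplex.prev ℕ 0) ChainComplex.next_nat_zero).1 h0
      have hg0 : (X.sc' 1 0 0).g = 0 := X.shape 0 0 (by simp)
      exact ((X.sc' 1 0 0).exact_iff_epi hg0).1 h0
    have hzero : (𝟙 (X.X 0)) = s 0 ≫ X.d 1 0 := by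
      rw [← cancel_epi (X.d 1 0), Category.comp_id, ← Category.assoc, Category.assoc]
      exact (hs 0).symm
    -- the key step: if `f' ≫ d` recovers the defect, so does the next one
    have step : ∀ (n : ℕ) (f' : X.X (n + 1) ⟶ X.X (n + 2)),
        X.d (n + 2) (n + 1) ≫ f' ≫ X.d (n + 2) (n + 1) = X.d (n + 2) (n + 1) →
        ((𝟙 (X.X (n + 2)) - X.d (n + 2) (n + 1) ≫ f') ≫ s (n + 2)) ≫ X.d (n + 3) (n + 2)
          = 𝟙 (X.X (n + 2)) - X.d (n + 2) (n + 1) ≫ f' := by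
      intro n f' hf'
      rw [Category.assoc]
      exact aux_split_lift X (n + 1) (hex (n + 2)) (s (n + 2)) (hs (n + 2)) _
        (by rw [Preadditive.sub_comp, Category.id_comp, Category.assoc, hf', sub_self])
    refine ⟨Homotopy.mkInductive (𝟙 X) (s 0) (by simpa using hzero)
      ((𝟙 (X.X 1) - X.d 1 0 ≫ s 0) ≫ s 1) ?_ ?_⟩
    · -- comm_one
      have h1 : ((𝟙 (X.X 1) - X.d 1 0 ≫ s 0) ≫ s 1) ≫ X.d 2 1
          = 𝟙 (X.X 1) - X.d 1 0 ≫ s 0 := by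
        rw [Category.assoc]
        refine aux_split_lift X 0 (hex 1) (s 1) (hs 1) _ ?_
        rw [Preadditive.sub_comp, Category.id_comp, Category.assoc, hs 0, sub_self]
      simp only [HomologicalComplex.id_f, h1]
      abel
    · -- succ
      rintro n ⟨f, f', hcomm⟩
      refine ⟨(𝟙 (X.X (n + 2)) - X.d (n + 2) (n + 1) ≫ f') ≫ s (n + 2), ?_⟩
      have hf' : X.d (n + 2) (n + 1) ≫ f' ≫ X.d (n + 2) (n + 1) = X.d (n + 2) (n + 1) := by
        have := congrArg (fun m => X.d (n + 2) (n + 1) ≫ m) hcomm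
        simpa [Preadditive.comp_add, Category.comp_id, X.d_comp_d_assoc] using this.symm
      rw [step n f' hf']
      simp only [HomologicalComplex.id_f]
      abel
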